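/- In any triangle with sides a, b, c, circumradius R, and inradius r, 1/(b+c−a)² + 1/(c+a−b)² + 1/(a+b−c)² ≥ (1/r²)·(1/2 − 9r/(4(4R + r))). -/

import Mathlib

set_option maxHeartbeats 1000000

theorem schur_aux (A B C : ℝ) (hA : 0 < A) (hB : 0 < B) (hC : 0 < C) :
    A^2*B+A^2*C+B^2*A+B^2*C+C^2*A+C^2*B ≤ A^3+B^3+C^3+3*(A*B*C) := by
  nlinarith [mul_nonneg hA.le (sq_nonneg (A-B)), mul_nonneg hB.le (sq_nonneg (B-C)),
    mul_nonneg hC.le (sq_nonneg (C-A)), mul_nonneg hA.le (sq_nonneg (A-C)),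
    mul_nonneg hB.le (sq_nonneg (A-B)), mul_nonneg hC.le (sq_nonneg (B-C))]

theorem aux_ineq (x y z : ℝ) (hx : 0 < x) (hy : 0 < y) (hz : 0 < z) :
    1/(2*x)^2 + 1/(2*y)^2 + 1/(2*z)^2
      ≥ (x+y+z)/(2*(x*y*z)) - 9/(4*(x*y+y*z+z*x)) := by
  have hs := schur_aux (y*z) (z*x) (x*y) (by positivity) (by positivity) (by positivity)
  rw [ge_iff_le, ← sub_nonneg]
  have h : 1/(2*x)^2 + 1/(2*y)^2 + 1/(2*z)^2 - ((x+y+z)/(2*(x*y*z)) - 9/(4*(x*y+y*z+z*x)))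
      = ((y*z)^3+(z*x)^3+(x*y)^3+3*((y*z)*(z*x)*(x*y))
        - ((y*z)^2*(z*x)+(y*z)^2*(x*y)+(z*x)^2*(y*z)+(z*x)^2*(x*y)+(x*y)^2*(y*z)+(x*y)^2*(z*x)))
        / (4*x^2*y^2*z^2*(x*y+y*z+z*x)) := by
    field_simp
    ring
  rw [h]
  exact div_nonneg (by linarith) (by positivity)

theorem application_three (a b c : ℝ) (ha : 0 < a) (hb : 0 < b) (hc : 0 < c)
    (hA : a < b + c) (hB : b < c + a) (hC : c < a + b) (s S : ℝ) (hs : s = (a + b + c) / 2)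
    (hS : S = Real.sqrt (s * (s - a) * (s - b) * (s - c))) (R : ℝ) (hR : R = a * b * c / (4 * S)) (r : ℝ) (hr : r = S / s) :
    1 / (b + c - a) ^ 2 + 1 / (c + a - b) ^ 2 + 1 / (a + b - c) ^ 2
      ≥ 1 / r ^ 2 * (1 / 2 - 9 * r / (4 * (4 * R + r))) := by
  obtain ⟨x, hxd⟩ : ∃ x : ℝ, x = s - a := ⟨_, rfl⟩
  obtain ⟨y, hyd⟩ : ∃ y : ℝ, y = s - b := ⟨_, rfl⟩
  obtain ⟨z, hzd⟩ : ∃ z : ℝ, z = s - c := ⟨_, rfl⟩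
  have hx : 0 < x := by rw [hxd, hs]; linarith
  have hy : 0 < y := by rw [hyd, hs]; linarith
  have hz : 0 < z := by rw [hzd, hs]; linarith
  have hspos : 0 < s := by rw [hs]; linarith
  have hSpos : 0 < S := by
    rw [hS, ← hxd, ← hyd, ← hzd]
    exact Real.sqrt_pos.mpr (by positivity)
  have hS2 : S^2 = s * x * y * z := by
    rw [hS, ← hxd, ← hyd, ← hzd, sq, Real.mul_self_sqrt (by positivity)]
  have hrpos : 0 < r := by rw [hr]; positivity
  have hsxyz : s = x + y + z := by rw [hxd, hyd, hzd, hs]; ring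
  have ha' : a = y + z := by rw [hyd, hzd, hs]; ring
  have hb' : b = z + x := by rw [hzd, hxd, hs]; ring
  have hc' : c = x + y := by rw [hxd, hyd, hs]; ring
  have hr2 : r^2 = x*y*z/(x+y+z) := by
    rw [hr, div_pow, hS2, hsxyz]
    have : (0:ℝ) < x + y + z := by positivity
    field_simp
  have hq : r * (4*R + r) = x*y + y*z + z*x := by
    have h4Rr : 4*R*r = a*b*c/s := by
      rw [hR, hr]; field_simp
    have he : r * (4*R + r) = 4*R*r + r^2 := by ring
    rw [he, h4Rr, hr2, ha', hb', hc', hsxyz]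
    have : (0:ℝ) < x + y + z := by positivity
    field_simp
    ring
  have hqpos : 0 < x*y + y*z + z*x := by positivity
  have h4R : 4*R + r = (x*y + y*z + z*x)/r := by
    rw [eq_div_iff hrpos.ne']
    linarith [hq, mul_comm r (4*R+r)]
  have hstep : 9 * r / (4 * ((x*y + y*z + z*x)/r)) = 9*r^2/(4*(x*y + y*z + z*x)) := by
    rw [eq_div_iff (by positivity)]
    field_simp
  have hRHS : 1 / r ^ 2 * (1 / 2 - 9 * r / (4 * (4 * R + r)))
      = (x+y+z)/(2*(x*y*z)) - 9/(4*(x*y+y*z+z*x)) := by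
    rw [h4R, hstep, hr2]
    have h1 : (0:ℝ) < x + y + z := by positivity
    field_simp
  rw [hRHS]
  have e1 : b + c - a = 2*x := by rw [ha', hb', hc']; ring
  have e2 : c + a - b = 2*y := by rw [ha', hb', hc']; ring
  have e3 : a + b - c = 2*z := by rw [ha', hb', hc']; ring
  rw [e1, e2, e3]
  exact aux_ineq x y z hx hy hz
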